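/- arXiv:1512.07608 — 5 statements merged into one kernel-verified Lean document; each statement's English description precedes it below -/
import Mathlib

section
/- For every positive integer s, ∑_{k=1}^{s} (-1)^k · P(2s, 2k-1) · ζ_E(2k)/π^{2k} = -1/(2(2s+1)), where P(n, r) = n!/(n-r)! is the falling factorial (number of permutations) and ζ_E is the Euler zeta function. -/
open Real

noncomputable def eulerZeta (s : ℕ) : ℝ := ∑' n : ℕ, (-1 : ℝ) ^ ((n + 1) - 1) / (n + 1 : ℝ) ^ s

namespace RecurrenceAux

open PowerSeries Finset Nat

lemma F_eq : (PowerSeries.mk fun n => Polynomial.aeval ((1:ℚ)/2) ((1 / n ! : ℚ) • Polynomial.bernoulli n))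
    = 2 * rescale ((1:ℚ)/2) (bernoulliPowerSeries ℚ) - bernoulliPowerSeries ℚ := by
  have hexp : (exp ℚ - 1) ≠ 0 := by
    intro h
    have := congrArg (PowerSeries.coeff 1) h
    simp [coeff_exp] at this
  apply mul_right_cancel₀ hexp
  rw [Polynomial.bernoulli_generating_function ((1:ℚ)/2)]
  set E := rescale ((1:ℚ)/2) (exp ℚ) with hEdef
  set RB := rescale ((1:ℚ)/2) (bernoulliPowerSeries ℚ) with hRBdef
  have hE : E * E = exp ℚ := by
    rw [hEdef, exp_mul_exp_eq_exp_add]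
    norm_num [rescale_one]
  have hB : RB * (E - 1) = PowerSeries.C ((1:ℚ)/2) * PowerSeries.X := by
    rw [hRBdef, hEdef, ← rescale_X ((1:ℚ)/2), ← map_one (rescale ((1:ℚ)/2)), ← map_sub, ← map_mul,
      bernoulliPowerSeries_mul_exp_sub_one]
  have key : (exp ℚ - 1) = (E - 1) * (E + 1) := by rw [← hE]; ring
  have h2 : (2 : ℚ⟦X⟧) * (PowerSeries.C ((1:ℚ)/2) * PowerSeries.X) = PowerSeries.X := by
    have : (2 : ℚ⟦X⟧) = PowerSeries.C (2:ℚ) := (map_ofNat (PowerSeries.C (R := ℚ)) 2).symm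
    rw [this, ← mul_assoc, ← map_mul]; norm_num
  linear_combination (bernoulliPowerSeries_mul_exp_sub_one ℚ) - 2*RB*key - 2*(E+1)*hB - (E+1)*h2

lemma eval_half (n : ℕ) :
    (2:ℚ)^n * (Polynomial.bernoulli n).eval (1/2 : ℚ) = (2 - 2^n) * bernoulli n := by
  have h := congrArg (PowerSeries.coeff n) F_eq
  rw [show (2 : ℚ⟦X⟧) = PowerSeries.C (2:ℚ) from (map_ofNat (PowerSeries.C (R := ℚ)) 2).symm] at h
  simp only [PowerSeries.coeff_mk, map_sub, PowerSeries.coeff_C_mul, PowerSeries.coeff_rescale,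
    bernoulliPowerSeries, Polynomial.aeval_def, Polynomial.eval₂_smul, smul_eq_mul,
    Algebra.algebraMap_self, map_id, RingHom.id_apply] at h
  rw [show Polynomial.eval₂ (RingHom.id ℚ) (1/2 : ℚ) (Polynomial.bernoulli n)
      = (Polynomial.bernoulli n).eval (1/2 : ℚ) by
        rw [Polynomial.eval₂_eq_eval_map, Polynomial.map_id]] at h
  have hf : ((n ! : ℚ)) ≠ 0 := by exact_mod_cast n.factorial_ne_zero
  field_simp at h
  apply mul_right_cancel₀ (mul_ne_zero hf hf)
  have hh : (2:ℚ)^n * (1/2)^n = 1 := by rw [← mul_pow]; norm_num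
  linear_combination (2^n * (n ! : ℚ)^2) * h + (2 * bernoulli n * (n ! : ℚ)^2) * hh

lemma expand (n : ℕ) :
    (2:ℚ)^n * (Polynomial.bernoulli n).eval (1/2 : ℚ)
      = ∑ i ∈ Finset.range (n+1), (n.choose i : ℚ) * 2^i * bernoulli i := by
  rw [Polynomial.bernoulli_def, Polynomial.eval_finset_sum, Finset.mul_sum,
    ← Finset.sum_range_reflect (fun i => (n.choose i : ℚ) * 2^i * bernoulli i) (n+1)]
  apply Finset.sum_congr rfl
  intro i hi
  have hin : i ≤ n := Nat.lt_succ_iff.mp (Finset.mem_range.mp hi)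
  rw [Polynomial.eval_monomial, show n + 1 - 1 - i = n - i from by omega,
    Nat.choose_symm hin]
  have h2 : (2:ℚ)^i * (1/2 : ℚ)^i = 1 := by rw [← mul_pow]; norm_num
  have h1 : (2:ℚ)^n = 2^(n-i) * 2^i := by rw [← pow_add, Nat.sub_add_cancel hin]
  rw [h1]
  linear_combination (bernoulli (n-i)) * (n.choose i : ℚ) * (2:ℚ)^(n-i) * h2

lemma pair (m : ℕ) (f : ℕ → ℚ) :
    ∑ j ∈ Finset.range (2*m), f j = ∑ i ∈ Finset.range m, (f (2*i) + f (2*i+1)) := by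
  induction m with
  | zero => simp
  | succ m ih =>
      rw [Finset.sum_range_succ, show 2*(m+1) = 2*m+1+1 by ring, Finset.sum_range_succ,
        Finset.sum_range_succ, ← ih]
      ring

lemma bernoulli_odd (m : ℕ) (hm : Odd m) (h1 : m ≠ 1) : bernoulli m = 0 := by
  have h2 : 1 < m := by obtain ⟨t, ht⟩ := hm; omega
  rw [bernoulli_eq_bernoulli'_of_ne_one h1]
  exact bernoulli'_eq_zero_of_odd hm h2

lemma E1 (s : ℕ) (hs : 0 < s) :
    ∑ i ∈ Finset.range s, ((2*s+1).choose (2*i+2) : ℚ) * bernoulli (2*i+2)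
      = (2*(s:ℚ)+1)/2 - 1 := by
  set n := 2*s+1 with hn
  have h0 : ∑ j ∈ Finset.range (n+1), ((n.choose j : ℚ)) * bernoulli j = 0 := by
    rw [Finset.sum_range_succ, sum_bernoulli, if_neg (by omega : n ≠ 1),
      Nat.choose_self, bernoulli_odd n ⟨s, by omega⟩ (by omega)]
    norm_num
  rw [show n + 1 = 2*(s+1) by omega, pair] at h0
  rw [Finset.sum_range_succ'] at h0
  simp only [show ∀ i, 2*(i+1) = 2*i+2 from fun i => by ring,
    show ∀ i, 2*(i+1)+1 = 2*i+3 from fun i => by ring] at h0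
  have hodd : ∀ i : ℕ, ((n.choose (2*i+3) : ℚ)) * bernoulli (2*i+3) = 0 := by
    intro i
    rw [bernoulli_odd (2*i+3) ⟨i+1, by omega⟩ (by omega), mul_zero]
  simp only [hodd, add_zero, zero_add, mul_zero, mul_one, Nat.choose_zero_right, Nat.cast_one,
    bernoulli_zero, one_mul, Nat.choose_one_right, bernoulli_one] at h0
  have : ((n : ℚ)) = 2*(s:ℚ)+1 := by rw [hn]; push_cast; ring
  rw [this] at h0
  linear_combination h0

lemma E2 (s : ℕ) (hs : 0 < s) :
    ∑ i ∈ Finset.range s, ((2*s+1).choose (2*i+2) : ℚ) * 2^(2*i+2) * bernoulli (2*i+2)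
      = 2*(s:ℚ) := by
  set n := 2*s+1 with hn
  have h0 : ∑ j ∈ Finset.range (n+1), ((n.choose j : ℚ)) * 2^j * bernoulli j = 0 := by
    rw [← expand n, eval_half, bernoulli_odd n ⟨s, by omega⟩ (by omega), mul_zero]
  rw [show n + 1 = 2*(s+1) by omega, pair] at h0
  rw [Finset.sum_range_succ'] at h0
  simp only [show ∀ i, 2*(i+1) = 2*i+2 from fun i => by ring,
    show ∀ i, 2*(i+1)+1 = 2*i+3 from fun i => by ring] at h0
  have hodd : ∀ i : ℕ, ((n.choose (2*i+3) : ℚ)) * 2^(2*i+3) * bernoulli (2*i+3) = 0 := by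
    intro i
    rw [bernoulli_odd (2*i+3) ⟨i+1, by omega⟩ (by omega), mul_zero]
  simp only [hodd, add_zero, zero_add, mul_zero, mul_one, Nat.choose_zero_right, Nat.cast_one,
    bernoulli_zero, one_mul, Nat.choose_one_right, bernoulli_one, pow_zero, pow_one] at h0
  have : ((n : ℚ)) = 2*(s:ℚ)+1 := by rw [hn]; push_cast; ring
  rw [this] at h0
  linear_combination h0

lemma key_identity (s : ℕ) (hs : 0 < s) :
    ∑ i ∈ Finset.range s, ((2*s+1).choose (2*i+2) : ℚ) * (2 - 2^(2*i+2)) * bernoulli (2*i+2)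
      = -1 := by
  have h1 := E1 s hs
  have h2 := E2 s hs
  have : ∑ i ∈ Finset.range s, ((2*s+1).choose (2*i+2) : ℚ) * (2 - 2^(2*i+2)) * bernoulli (2*i+2)
      = 2 * (∑ i ∈ Finset.range s, ((2*s+1).choose (2*i+2) : ℚ) * bernoulli (2*i+2))
        - ∑ i ∈ Finset.range s, ((2*s+1).choose (2*i+2) : ℚ) * 2^(2*i+2) * bernoulli (2*i+2) := by
    rw [Finset.mul_sum, ← Finset.sum_sub_distrib]
    apply Finset.sum_congr rfl
    intro i _
    ring
  rw [this, h1, h2]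
  ring

lemma ratSum (s : ℕ) (hs : 0 < s) :
    ∑ i ∈ Finset.range s,
      (((2*s).descFactorial (2*i+1) : ℚ)) * 2^(2*i+2)
        * (Polynomial.bernoulli (2*i+2)).eval (1/2 : ℚ) / (2*((2*i+2)! : ℚ))
      = -1 / (2*(2*(s:ℚ)+1)) := by
  have hstep : ∀ i : ℕ,
      (((2*s).descFactorial (2*i+1) : ℚ)) * 2^(2*i+2)
        * (Polynomial.bernoulli (2*i+2)).eval (1/2 : ℚ) / (2*((2*i+2)! : ℚ))
      = ((2*s+1).choose (2*i+2) : ℚ) * (2 - 2^(2*i+2)) * bernoulli (2*i+2)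
          / (2*(2*(s:ℚ)+1)) := by
    intro i
    have hnat : (2*s+1) * (2*s).descFactorial (2*i+1) = (2*i+2)! * (2*s+1).choose (2*i+2) := by
      rw [show (2*s+1) * (2*s).descFactorial (2*i+1) = (2*s+1).descFactorial (2*i+2) from
        (Nat.succ_descFactorial_succ (2*s) (2*i+1)).symm]
      exact Nat.descFactorial_eq_factorial_mul_choose _ _
    have hq : ((2*s+1) * (2*s).descFactorial (2*i+1) : ℚ)
        = ((2*i+2)! : ℚ) * ((2*s+1).choose (2*i+2) : ℚ) := by exact_mod_cast congrArg Nat.cast hnat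
    have heval := eval_half (2*i+2)
    have hf : (((2*i+2)! : ℚ)) ≠ 0 := by exact_mod_cast (2*i+2).factorial_ne_zero
    have hs1 : (2*(s:ℚ)+1) ≠ 0 := by positivity
    have hcast : ((2*s+1 : ℕ) : ℚ) = 2*(s:ℚ)+1 := by push_cast; ring
    rw [div_eq_div_iff (by positivity) (by positivity)]
    linear_combination 2 * (2:ℚ)^(2*i+2) * (Polynomial.bernoulli (2*i+2)).eval (1/2 : ℚ) * hq
      + 2 * ((2*i+2)! : ℚ) * ((2*s+1).choose (2*i+2) : ℚ) * heval
  calc ∑ i ∈ Finset.range s,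
      (((2*s).descFactorial (2*i+1) : ℚ)) * 2^(2*i+2)
        * (Polynomial.bernoulli (2*i+2)).eval (1/2 : ℚ) / (2*((2*i+2)! : ℚ))
      = ∑ i ∈ Finset.range s, ((2*s+1).choose (2*i+2) : ℚ) * (2 - 2^(2*i+2)) * bernoulli (2*i+2)
          / (2*(2*(s:ℚ)+1)) := Finset.sum_congr rfl fun i _ => hstep i
    _ = (∑ i ∈ Finset.range s, ((2*s+1).choose (2*i+2) : ℚ) * (2 - 2^(2*i+2)) * bernoulli (2*i+2))
          / (2*(2*(s:ℚ)+1)) := by rw [Finset.sum_div]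
    _ = -1 / (2*(2*(s:ℚ)+1)) := by rw [key_identity s hs]

lemma eulerZeta_eq (k : ℕ) (hk : k ≠ 0) :
    eulerZeta (2*k) = (-1:ℝ)^k * (2*π)^(2*k) / 2 / ((2*k)! : ℝ)
      * ((((Polynomial.bernoulli (2*k)).eval (1/2 : ℚ) : ℚ) : ℝ)) := by
  have h := hasSum_one_div_nat_pow_mul_cos hk (x := (1/2 : ℝ)) (by norm_num)
  have heval : (Polynomial.map (algebraMap ℚ ℝ) (Polynomial.bernoulli (2*k))).eval ((1:ℝ)/2)
      = ((((Polynomial.bernoulli (2*k)).eval (1/2 : ℚ) : ℚ) : ℝ)) := by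
    rw [show ((1:ℝ)/2) = algebraMap ℚ ℝ (1/2 : ℚ) by simp [eq_ratCast],
      Polynomial.eval_map, Polynomial.eval₂_at_apply]
    simp [eq_ratCast]
  rw [show (1/2 : ℝ) = (1:ℝ)/2 by norm_num, heval] at h
  have hcos : ∀ n : ℕ, Real.cos (2*π*(n:ℝ)*((1:ℝ)/2)) = (-1:ℝ)^n := by
    intro n
    rw [show 2*π*(n:ℝ)*((1:ℝ)/2) = (n:ℝ)*π - 0 by ring, Real.cos_nat_mul_pi_sub, Real.cos_zero,
      mul_one]
  simp only [hcos] at h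
  rw [← hasSum_nat_add_iff' 1] at h
  have h0 : ∑ i ∈ Finset.range 1, (1:ℝ)/(i:ℝ)^(2*k) * (-1:ℝ)^i = 0 := by
    simp [zero_pow (by omega : 2*k ≠ 0)]
  rw [h0, sub_zero] at h
  have h2 := h.neg
  have h3 : HasSum (fun n : ℕ => (-1:ℝ)^n / ((n:ℝ)+1)^(2*k))
      (-((-1:ℝ)^(k+1) * (2*π)^(2*k) / 2 / ((2*k)! : ℝ)
        * ((((Polynomial.bernoulli (2*k)).eval (1/2 : ℚ) : ℚ) : ℝ)))) := by
    convert h2 using 2 with n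
    · rfl
    push_cast
    rw [pow_succ]
    ring
  rw [eulerZeta]
  simp only [Nat.add_sub_cancel]
  rw [h3.tsum_eq, pow_succ]
  ring

end RecurrenceAux

theorem recurrence_sum (s : ℕ) (hs : 0 < s) :
    ∑ k ∈ Finset.Icc 1 s,
      (-1 : ℝ) ^ k * ((2 * s).descFactorial (2 * k - 1) : ℝ) * eulerZeta (2 * k) / π ^ (2 * k)
      = -1 / (2 * (2 * (s : ℝ) + 1)) := by
  rw [← Finset.Ico_add_one_right_eq_Icc, Finset.sum_Ico_eq_sum_range]
  have hterm : ∀ i : ℕ,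
      (-1 : ℝ) ^ (1+i) * ((2 * s).descFactorial (2 * (1+i) - 1) : ℝ) * eulerZeta (2 * (1+i))
          / π ^ (2 * (1+i))
      = (((((2*s).descFactorial (2*i+1) : ℚ)) * 2^(2*i+2)
          * (Polynomial.bernoulli (2*i+2)).eval (1/2 : ℚ) / (2*(Nat.factorial (2*i+2) : ℚ)) : ℚ) : ℝ) := by
    intro i
    have hidx : 2*i+2 - 1 = 2*i+1 := by omega
    have hidx2 : 2*(1+i) = 2*i+2 := by omega
    have hez := RecurrenceAux.eulerZeta_eq (1+i) (by omega)
    rw [hidx2] at hez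
    rw [hidx2, hidx, hez]
    have hq : ((((2*s).descFactorial (2*i+1) : ℚ) * 2^(2*i+2)
          * (Polynomial.bernoulli (2*i+2)).eval (1/2 : ℚ) / (2*(Nat.factorial (2*i+2) : ℚ)) : ℚ) : ℝ)
        = ((2*s).descFactorial (2*i+1) : ℝ) * 2^(2*i+2)
          * (((Polynomial.bernoulli (2*i+2)).eval (1/2 : ℚ) : ℚ) : ℝ)
          / (2*(Nat.factorial (2*i+2) : ℝ)) := by push_cast; ring
    rw [hq]
    have hpi : (π : ℝ) ≠ 0 := Real.pi_ne_zero
    have hfac : ((Nat.factorial (2*i+2) : ℝ)) ≠ 0 := by exact_mod_cast (2*i+2).factorial_ne_zero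
    rw [mul_pow 2 π]
    set D := (((2*s).descFactorial (2*i+1) : ℕ) : ℝ) with hD
    set Q := (((Polynomial.bernoulli (2*i+2)).eval (1/2 : ℚ) : ℚ) : ℝ) with hQ
    set F := ((Nat.factorial (2*i+2) : ℕ) : ℝ) with hF
    set P := (π : ℝ)^(2*i+2) with hP
    have hPne : P ≠ 0 := pow_ne_zero _ hpi
    rcases neg_one_pow_eq_or ℝ (1+i) with hc | hc <;> rw [hc] <;> field_simp <;> ring
  rw [Finset.sum_congr rfl fun i _ => hterm i]
  rw [← Rat.cast_sum]
  simp only [Nat.add_sub_cancel]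
  rw [RecurrenceAux.ratSum s hs]
  push_cast
  ring
end

section
/- For every positive integer s, ∑_{k=1}^{s} (-1)^k · P(2s, 2k-1) · ζ_E(2k)/(2^{2k} π^{2k}) = (2s+1-2^{2s})/((2s+1)·2^{2s+1}), where P(n, r) = n!/(n-r)! and ζ_E is the Euler zeta function. -/
open Real
open scoped Nat

lemma bern_odd_half {k : ℕ} (hk : k ≠ 0) :
    (Polynomial.bernoulli (2 * k + 1)).eval (1/2 : ℚ) = 0 := by
  have hx : (1/2 : ℝ) ∈ Set.Icc (0:ℝ) 1 := by norm_num
  have H := hasSum_one_div_nat_pow_mul_sin hk hx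
  have heq : (fun n : ℕ => 1 / (n : ℝ) ^ (2 * k + 1) * Real.sin (2 * π * n * (1/2)))
      = fun _ : ℕ => (0:ℝ) := by
    funext n
    have h2 : 2 * π * n * (1/2) = (n : ℝ) * π := by ring
    rw [h2, Real.sin_nat_mul_pi, mul_zero]
  rw [heq] at H
  have hz := H.unique hasSum_zero
  have hc : ((-1 : ℝ) ^ (k + 1) * (2 * π) ^ (2 * k + 1) / 2 / (2 * k + 1)!) ≠ 0 := by
    apply div_ne_zero (div_ne_zero (mul_ne_zero (by positivity) (by positivity)) two_ne_zero)
    exact_mod_cast (Nat.factorial_ne_zero _)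
  have hev : (Polynomial.map (algebraMap ℚ ℝ) (Polynomial.bernoulli (2 * k + 1))).eval
      (1/2 : ℝ) = 0 := by
    rcases mul_eq_zero.mp hz with h | h
    · exact absurd h hc
    · exact h
  have : ((1:ℝ)/2) = algebraMap ℚ ℝ (1/2) := by norm_num
  rw [this, Polynomial.eval_map, Polynomial.eval₂_at_apply, eq_ratCast] at hev
  exact_mod_cast hev

lemma eulerZeta_even {k : ℕ} (hk : k ≠ 0) :
    eulerZeta (2 * k) = (-1 : ℝ) ^ k * (2 * π) ^ (2 * k) / (2 * (2 * k)!) *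
      (Rat.cast (Polynomial.eval (1/2 : ℚ) (Polynomial.bernoulli (2 * k))) : ℝ) := by
  have hx : (1/2 : ℝ) ∈ Set.Icc (0:ℝ) 1 := by norm_num
  have H := hasSum_one_div_nat_pow_mul_cos hk hx
  set B : ℝ := (Rat.cast (Polynomial.eval (1/2 : ℚ) (Polynomial.bernoulli (2 * k))) : ℝ) with hB
  have hBeq : (Polynomial.map (algebraMap ℚ ℝ) (Polynomial.bernoulli (2 * k))).eval
      (1/2 : ℝ) = B := by
    have : ((1:ℝ)/2) = algebraMap ℚ ℝ (1/2) := by norm_num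
    rw [this, Polynomial.eval_map, Polynomial.eval₂_at_apply, eq_ratCast, hB]
  have heq : (fun n : ℕ => 1 / (n : ℝ) ^ (2 * k) * Real.cos (2 * π * n * (1/2)))
      = fun n : ℕ => (-1 : ℝ) ^ n / (n : ℝ) ^ (2 * k) := by
    funext n
    have h2 : 2 * π * n * (1/2) = (n : ℝ) * π - 0 := by ring
    rw [h2, Real.cos_nat_mul_pi_sub, Real.cos_zero]
    ring
  rw [heq, hBeq] at H
  -- shift index by one
  have H1 : HasSum (fun n : ℕ => (-1 : ℝ) ^ (n + 1) / ((n : ℝ) + 1) ^ (2 * k))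
      ((-1 : ℝ) ^ (k + 1) * (2 * π) ^ (2 * k) / 2 / (2 * k)! * B) := by
    have h0 : (-1 : ℝ) ^ (0:ℕ) / ((0:ℕ) : ℝ) ^ (2 * k) = 0 := by
      rw [Nat.cast_zero, zero_pow (by omega), div_zero]
    have h2k : 2 * k ≠ 0 := by omega
    have := (hasSum_nat_add_iff' (f := fun n : ℕ => (-1 : ℝ) ^ n / (n : ℝ) ^ (2 * k)) 1).mpr H
    simpa [Finset.sum_range_one, h0, zero_pow h2k] using this
  have H2 : HasSum (fun n : ℕ => (-1 : ℝ) ^ ((n + 1) - 1) / ((n : ℝ) + 1) ^ (2 * k))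
      (-((-1 : ℝ) ^ (k + 1) * (2 * π) ^ (2 * k) / 2 / (2 * k)! * B)) := by
    have := H1.neg
    convert this using 2 with n
    · rfl
    rw [Nat.add_sub_cancel, pow_succ]
    ring
  rw [eulerZeta, H2.tsum_eq]
  have : -((-1 : ℝ) ^ (k + 1)) = (-1 : ℝ) ^ k := by rw [pow_succ]; ring
  field_simp
  ring

lemma bern_half_sum (s : ℕ) (hs : 0 < s) :
    ∑ k ∈ Finset.Icc 1 s, ((2 * s + 1).choose (2 * k) : ℚ) *
      (Polynomial.bernoulli (2 * k)).eval (1/2 : ℚ)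
      = (2 * s + 1 : ℚ) * (1/2) ^ (2 * s) - 1 := by
  set F : ℕ → ℚ := fun j => ((2 * s + 1).choose j : ℚ) *
    (Polynomial.bernoulli j).eval (1/2 : ℚ) with hF
  have key : ∑ j ∈ Finset.range (2 * s + 1), F j = (2 * s + 1 : ℚ) * (1/2) ^ (2 * s) := by
    have h := congrArg (Polynomial.eval (1/2 : ℚ)) (Polynomial.sum_bernoulli (2 * s))
    rw [Polynomial.eval_finset_sum, Polynomial.eval_monomial] at h
    simp only [Polynomial.eval_smul, smul_eq_mul] at h
    simp only [hF]
    rw [h]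
    push_cast
    ring
  have hodd : ∀ j, Odd j → F j = 0 := by
    intro j hj
    obtain ⟨m, rfl⟩ := hj
    rcases Nat.eq_zero_or_pos m with rfl | hm
    · simp [hF, Polynomial.bernoulli_def, Finset.sum_range_succ, Polynomial.eval_smul]
      norm_num
    · have h0 := bern_odd_half (k := m) (by omega)
      simp only [hF]
      exact mul_eq_zero_of_right _ h0
  have himg : ∑ j ∈ Finset.range (2 * s + 1), F j
      = ∑ j ∈ (Finset.range (s + 1)).image (fun k => 2 * k), F j := by
    refine (Finset.sum_subset ?_ ?_).symm
    · intro j hj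
      simp only [Finset.mem_image, Finset.mem_range] at hj ⊢
      obtain ⟨m, hm, rfl⟩ := hj
      omega
    · intro j hj hj2
      apply hodd
      rcases Nat.even_or_odd j with he | ho
      · exfalso
        obtain ⟨m, rfl⟩ := he
        apply hj2
        simp only [Finset.mem_image, Finset.mem_range]
        refine ⟨m, ?_, by ring⟩
        simp only [Finset.mem_range] at hj
        omega
      · exact ho
  have hinj : ∑ j ∈ (Finset.range (s + 1)).image (fun k => 2 * k), F j
      = ∑ k ∈ Finset.range (s + 1), F (2 * k) :=
    Finset.sum_image (by intro a _ b _ h; simp only at h; omega)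
  have hsplit : ∑ k ∈ Finset.range (s + 1), F (2 * k)
      = F 0 + ∑ k ∈ Finset.Icc 1 s, F (2 * k) := by
    rw [Finset.sum_range_succ' (fun k => F (2 * k)) s]
    rw [← Finset.Ico_add_one_right_eq_Icc, Finset.sum_Ico_eq_sum_range, add_comm]
    congr 1
    apply Finset.sum_congr (by simp)
    intro i _
    congr 1
    omega
  have hF0 : F 0 = 1 := by simp [hF]
  have := key
  rw [himg, hinj, hsplit, hF0] at this
  linarith

lemma rat_sum (s : ℕ) (hs : 0 < s) :
    ∑ k ∈ Finset.Icc 1 s,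
      (((2 * s).descFactorial (2 * k - 1) : ℚ) *
        (Polynomial.bernoulli (2 * k)).eval (1/2 : ℚ) / (2 * (2 * k)!))
      = (2 * (s : ℚ) + 1 - 2 ^ (2 * s)) / ((2 * (s : ℚ) + 1) * 2 ^ (2 * s + 1)) := by
  have hterm : ∀ k ∈ Finset.Icc 1 s,
      ((2 * s).descFactorial (2 * k - 1) : ℚ) *
        (Polynomial.bernoulli (2 * k)).eval (1/2 : ℚ) / (2 * (2 * k)!)
      = ((2 * s + 1).choose (2 * k) : ℚ) *
        (Polynomial.bernoulli (2 * k)).eval (1/2 : ℚ) / (2 * (2 * s + 1)) := by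
    intro k hk
    simp only [Finset.mem_Icc] at hk
    have hnat : (2 * s + 1) * (2 * s).descFactorial (2 * k - 1)
        = (2 * k)! * ((2 * s + 1).choose (2 * k)) := by
      have h1 : (2 * s + 1).descFactorial (2 * k) = (2 * s + 1) * (2 * s).descFactorial (2 * k - 1) := by
        have h2 : 2 * k = (2 * k - 1) + 1 := by omega
        rw [h2, Nat.succ_descFactorial_succ]
        simp
      rw [← h1, Nat.descFactorial_eq_factorial_mul_choose]
    have hq : ((2 * s : ℚ) + 1) * ((2 * s).descFactorial (2 * k - 1) : ℚ)
        = ((2 * k)! : ℚ) * ((2 * s + 1).choose (2 * k) : ℚ) := by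
      exact_mod_cast congrArg (Nat.cast : ℕ → ℚ) hnat
    have hfac : ((2 * k)! : ℚ) ≠ 0 := by exact_mod_cast (Nat.factorial_ne_zero _)
    have hs1 : (2 * (s:ℚ) + 1) ≠ 0 := by positivity
    rw [div_eq_div_iff (mul_ne_zero two_ne_zero hfac) (mul_ne_zero two_ne_zero hs1)]
    linear_combination 2 * ((Polynomial.bernoulli (2 * k)).eval (1/2 : ℚ)) * hq
  rw [Finset.sum_congr rfl hterm, ← Finset.sum_div, bern_half_sum s hs]
  have hs1 : (2 * (s:ℚ) + 1) ≠ 0 := by positivity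
  rw [div_eq_div_iff (by positivity) (by positivity)]
  have h12 : (1/2:ℚ) ^ (2 * s) * 2 ^ (2 * s) = 1 := by
    rw [← mul_pow]; norm_num
  ring_nf
  ring_nf at h12
  nlinarith [h12]

theorem recurrence_sum2 (s : ℕ) (hs : 0 < s) :
    ∑ k ∈ Finset.Icc 1 s,
      (-1 : ℝ) ^ k * ((2 * s).descFactorial (2 * k - 1) : ℝ) * eulerZeta (2 * k)
        / (2 ^ (2 * k) * π ^ (2 * k))
      = (2 * (s : ℝ) + 1 - 2 ^ (2 * s)) / ((2 * (s : ℝ) + 1) * 2 ^ (2 * s + 1)) := by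
  have hterm : ∀ k ∈ Finset.Icc 1 s,
      (-1 : ℝ) ^ k * ((2 * s).descFactorial (2 * k - 1) : ℝ) * eulerZeta (2 * k)
        / (2 ^ (2 * k) * π ^ (2 * k))
      = ((2 * s).descFactorial (2 * k - 1) : ℝ) *
          (Rat.cast (Polynomial.eval (1/2 : ℚ) (Polynomial.bernoulli (2 * k))) : ℝ) / (2 * (2 * k)!) := by
    intro k hk
    simp only [Finset.mem_Icc] at hk
    rw [eulerZeta_even (by omega : k ≠ 0)]
    have hp : (2:ℝ) ^ (2 * k) * π ^ (2 * k) = (2 * π) ^ (2 * k) := by rw [mul_pow]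
    have hpne : ((2 * π : ℝ)) ^ (2 * k) ≠ 0 := by positivity
    have hfac : ((2 * k)! : ℝ) ≠ 0 := by exact_mod_cast Nat.factorial_ne_zero _
    have h1 : (-1 : ℝ) ^ k * (-1) ^ k = 1 := by
      rw [← pow_add]
      exact Even.neg_one_pow ⟨k, by ring⟩
    rw [hp]
    set d : ℝ := ((2 * s).descFactorial (2 * k - 1) : ℝ)
    set B : ℝ := (Rat.cast (Polynomial.eval (1/2 : ℚ) (Polynomial.bernoulli (2 * k))) : ℝ)
    calc (-1:ℝ) ^ k * d * ((-1:ℝ) ^ k * (2 * π) ^ (2 * k) / (2 * (2 * k)!) * B) / (2 * π) ^ (2 * k)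
        = ((-1:ℝ) ^ k * (-1) ^ k) * (d * B / (2 * (2 * k)!)) * ((2 * π) ^ (2 * k) / (2 * π) ^ (2 * k)) := by
          ring
      _ = d * B / (2 * (2 * k)!) := by rw [h1, div_self hpne]; ring
  rw [Finset.sum_congr rfl hterm]
  have hcast := congrArg (Rat.cast : ℚ → ℝ) (rat_sum s hs)
  push_cast at hcast
  convert hcast using 2
end

section
/- For every integer s ≥ 2, ζ_E(2s) = ((-1)^s π^{2s} / P(2s, 2s-1)) · ( 1/((2s-1)(2s+1)) − ∑_{k=1}^{s-1} (-1)^k ζ_E(2k)/π^{2k} · (P(2s, 2k-1) − P(2s-2, 2k-1)) ), where P(n, r) = n!/(n-r)! and ζ_E is the Euler zeta function. -/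
open Real Finset Nat PowerSeries

-- power series identity
lemma PS : rescale (2:ℚ) (bernoulliPowerSeries ℚ) * (exp ℚ + 1) = 2 * bernoulliPowerSeries ℚ := by
  have hexp : exp ℚ - 1 ≠ 0 := by
    simp only [PowerSeries.exp, PowerSeries.ext_iff, Ne, not_forall]
    use 1
    simp [factorial_ne_zero]
  apply mul_right_cancel₀ hexp
  calc rescale (2:ℚ) (bernoulliPowerSeries ℚ) * (exp ℚ + 1) * (exp ℚ - 1)
      = rescale (2:ℚ) (bernoulliPowerSeries ℚ) * (exp ℚ ^ 2 - 1) := by ring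
    _ = rescale (2:ℚ) (bernoulliPowerSeries ℚ) * (rescale (2:ℚ) (exp ℚ) - 1) := by
        rw [exp_pow_eq_rescale_exp]; norm_num
    _ = rescale (2:ℚ) (bernoulliPowerSeries ℚ * (exp ℚ - 1)) := by
        rw [map_mul, map_sub, map_one]
    _ = rescale (2:ℚ) X := by rw [bernoulliPowerSeries_mul_exp_sub_one]
    _ = PowerSeries.C (2:ℚ) * X := rescale_X 2
    _ = 2 * bernoulliPowerSeries ℚ * (exp ℚ - 1) := by
        rw [mul_assoc, bernoulliPowerSeries_mul_exp_sub_one]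
        rw [show ((2:ℚ⟦X⟧)) = PowerSeries.C (2:ℚ) from (map_ofNat (PowerSeries.C (R := ℚ)) 2).symm]

lemma L1' (n : ℕ) : ∑ i ∈ range (n + 1), (n.choose i : ℚ) * 2 ^ i * bernoulli i
    = (2 - 2 ^ n) * bernoulli n := by
  have h : rescale (2:ℚ) (bernoulliPowerSeries ℚ) * exp ℚ
      = PowerSeries.C (2:ℚ) * bernoulliPowerSeries ℚ - rescale (2:ℚ) (bernoulliPowerSeries ℚ) := by
    rw [show PowerSeries.C (2:ℚ) = (2:ℚ⟦X⟧) from map_ofNat (PowerSeries.C (R := ℚ)) 2, ← PS]; ring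
  have h2 := congrArg (PowerSeries.coeff (R := ℚ) n) h
  rw [PowerSeries.coeff_mul, sum_antidiagonal_eq_sum_range_succ_mk, map_sub] at h2
  have hcB : ∀ j a, (PowerSeries.coeff (R := ℚ) j) (rescale a (bernoulliPowerSeries ℚ))
      = a ^ j * (bernoulli j / j !) := by
    intro j a
    simp [PowerSeries.coeff_rescale, bernoulliPowerSeries]
  have hfact : ∀ m : ℕ, (m ! : ℚ) ≠ 0 := fun m => mod_cast factorial_ne_zero m
  simp only [hcB, PowerSeries.coeff_exp, PowerSeries.coeff_C_mul, Algebra.algebraMap_self_apply,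
    RingHom.id_apply] at h2
  simp only [bernoulliPowerSeries, PowerSeries.coeff_mk, Algebra.algebraMap_self_apply] at h2
  have key : ∀ i ∈ range (n + 1), (n.choose i : ℚ) * 2 ^ i * bernoulli i
      = (n ! : ℚ) * (2 ^ i * (bernoulli i / (i ! : ℚ)) * (1 / ((n - i)! : ℚ))) := by
    intro i hi
    rw [mem_range] at hi
    have hc : ((n.choose i : ℚ) * i ! * (n - i)!) = (n ! : ℚ) := by
      exact_mod_cast congrArg (Nat.cast (R := ℚ))
        (Nat.choose_mul_factorial_mul_factorial (by omega : i ≤ n))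
    rw [← hc]
    field_simp
  rw [sum_congr rfl key, ← mul_sum, h2]
  field_simp

lemma L2 (n : ℕ) : 2 ^ n * (Polynomial.bernoulli n).eval (1/2 : ℚ) = (2 - 2 ^ n) * bernoulli n := by
  rw [Polynomial.bernoulli, Polynomial.eval_finset_sum, ← L1', mul_sum]
  refine sum_congr rfl fun i hi => ?_
  rw [mem_range] at hi
  rw [Polynomial.eval_monomial]
  have h : (2:ℚ) ^ i * 2 ^ (n - i) = 2 ^ n := by
    rw [← pow_add]; congr 1; omega
  have h2 : ((1:ℚ)/2) ^ (n - i) = 2 ^ i / 2 ^ n := by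
    rw [div_pow, one_pow, eq_div_iff (by positivity : (2:ℚ)^n ≠ 0), ← h]
    field_simp
  rw [h2]
  have : (2:ℚ) ^ n ≠ 0 := by positivity
  field_simp

lemma bernoulli_odd {n : ℕ} (h : Odd n) (h1 : 1 < n) : bernoulli n = 0 := by
  rw [bernoulli_eq_bernoulli'_of_ne_one (by omega), bernoulli'_eq_zero_of_odd h h1]

lemma sum_even (f : ℕ → ℚ) (hodd : ∀ j, Odd j → f j = 0) (m : ℕ) :
    ∑ j ∈ range (2 * m + 2), f j = ∑ k ∈ range (m + 1), f (2 * k) := by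
  induction m with
  | zero => simp [sum_range_succ, hodd 1 ⟨0, rfl⟩]
  | succ m ih =>
      have h : 2 * (m + 1) + 2 = (2 * m + 2) + 1 + 1 := by ring
      rw [h, sum_range_succ, sum_range_succ, ih, hodd (2*m+2+1) ⟨m+1, by ring⟩, sum_range_succ]
      rw [sum_range_succ (fun x => f (2*x)) (m+1), sum_range_succ (fun x => f (2*x)) m,
        show 2 * (m+1) = 2*m+2 by ring]
      ring

lemma dagger' (m : ℕ) (hm : 1 ≤ m) :
    ∑ k ∈ Icc 1 m, ((2*m+1).choose (2*k) : ℚ) * (2 - 2 ^ (2*k)) * bernoulli (2*k) = -1 := by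
  set f : ℕ → ℚ := fun j => ((2*m+1).choose j : ℚ) * (2 - 2 ^ j) * bernoulli j with hf
  have hodd : ∀ j, Odd j → f j = 0 := by
    intro j hj
    rcases eq_or_ne j 1 with rfl | hj1
    · simp [hf]
    · have : bernoulli j = 0 := bernoulli_odd hj (by rcases hj with ⟨t, rfl⟩; omega)
      simp [hf, this]
  have hsum : ∑ j ∈ range (2 * m + 2), f j = 0 := by
    have e1 : ∑ j ∈ range (2*m+2), ((2*m+1).choose j : ℚ) * bernoulli j = 0 := by
      rw [sum_range_succ, Nat.choose_self,
        bernoulli_odd ⟨m, by ring⟩ (by omega), sum_bernoulli]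
      rw [if_neg (by omega)]
      ring
    have e2 : ∑ j ∈ range (2*m+2), ((2*m+1).choose j : ℚ) * 2 ^ j * bernoulli j = 0 := by
      rw [show 2*m+2 = (2*m+1)+1 by ring, L1',
        bernoulli_odd ⟨m, by ring⟩ (by omega), mul_zero]
    calc ∑ j ∈ range (2 * m + 2), f j
        = 2 * ∑ j ∈ range (2*m+2), ((2*m+1).choose j : ℚ) * bernoulli j
          - ∑ j ∈ range (2*m+2), ((2*m+1).choose j : ℚ) * 2 ^ j * bernoulli j := by
          rw [mul_sum, ← sum_sub_distrib]
          exact sum_congr rfl fun j _ => by simp only [hf]; ring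
      _ = 0 := by rw [e1, e2]; ring
  rw [sum_even f hodd m] at hsum
  have h0 : f 0 = 1 := by norm_num [hf]
  have : ∑ k ∈ Icc 1 m, f (2 * k) = -1 := by
    have := sum_range_succ' (fun k => f (2 * k)) m
    rw [hsum] at this
    have hIcc : ∑ k ∈ Icc 1 m, f (2 * k) = ∑ k ∈ range m, f (2 * (k + 1)) := by
      rw [show Icc 1 m = Ico 1 (m+1) by rfl, sum_Ico_eq_sum_range]
      simp [add_comm]
    rw [hIcc]
    simp only [mul_zero] at this
    rw [h0] at this
    linarith [this]
  exact this

noncomputable def cq (k : ℕ) : ℚ :=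
  2 ^ (2*k) * (Polynomial.bernoulli (2*k)).eval (1/2 : ℚ) / (2 * (2*k)!)

lemma dagger (m : ℕ) (hm : 1 ≤ m) :
    ∑ k ∈ Icc 1 m, cq k * ((2*m+1).descFactorial (2*k) : ℚ) = -(1/2) := by
  have key : ∀ k ∈ Icc 1 m, cq k * ((2*m+1).descFactorial (2*k) : ℚ)
      = ((2*m+1).choose (2*k) : ℚ) * (2 - 2 ^ (2*k)) * bernoulli (2*k) / 2 := by
    intro k _
    rw [Nat.descFactorial_eq_factorial_mul_choose]
    push_cast
    rw [cq, L2]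
    have hfact : ((2*k)! : ℚ) ≠ 0 := mod_cast factorial_ne_zero (2*k)
    field_simp
  rw [sum_congr rfl key, ← sum_div, dagger' m hm]
  norm_num

lemma Fq (s : ℕ) (hs : 2 ≤ s) :
    cq s * ((2*s).descFactorial (2*s - 1) : ℚ) =
      1 / ((2*(s:ℚ) - 1) * (2*(s:ℚ) + 1)) -
        ∑ k ∈ Icc 1 (s - 1), cq k *
          (((2*s).descFactorial (2*k - 1) : ℚ) - ((2*s - 2).descFactorial (2*k - 1) : ℚ)) := by
  obtain ⟨t, rfl⟩ : ∃ t, s = t + 2 := ⟨s - 2, by omega⟩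
  have h1 := dagger (t + 2) (by omega)
  have h2 := dagger (t + 1) (by omega)
  rw [sum_Icc_succ_top (by omega : 1 ≤ t + 2)] at h1
  -- rewrite descFactorials
  have hd1 : ∀ k, 1 ≤ k → ((2*(t+2)+1).descFactorial (2*k) : ℚ)
      = (2*(t+2)+1 : ℚ) * ((2*(t+2)).descFactorial (2*k - 1) : ℚ) := by
    intro k hk
    rw [show 2*k = (2*k-1)+1 by omega, show 2*(t+2)+1 = (2*(t+2))+1 by rfl,
      Nat.succ_descFactorial_succ]
    push_cast
    ring
  have hd2 : ∀ k, 1 ≤ k → ((2*(t+1)+1).descFactorial (2*k) : ℚ)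
      = (2*(t+1)+1 : ℚ) * ((2*(t+2) - 2).descFactorial (2*k - 1) : ℚ) := by
    intro k hk
    rw [show 2*(t+2)-2 = 2*(t+1) by omega, show 2*k = (2*k-1)+1 by omega,
      show 2*(t+1)+1 = (2*(t+1))+1 by rfl, Nat.succ_descFactorial_succ]
    push_cast
    ring
  rw [sum_congr rfl (fun k hk => by
    rw [hd1 k (mem_Icc.mp hk).1, ← mul_assoc, mul_comm (cq k), mul_assoc])] at h1
  rw [sum_congr rfl (fun k hk => by
    rw [hd2 k (mem_Icc.mp hk).1, ← mul_assoc, mul_comm (cq k), mul_assoc])] at h2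
  rw [← mul_sum] at h1 h2
  rw [hd1 (t+2) (by omega)] at h1
  set S1 := ∑ k ∈ Icc 1 (t+1), cq k * ((2*(t+2)).descFactorial (2*k - 1) : ℚ) with hS1
  set S2 := ∑ k ∈ Icc 1 (t+1), cq k * ((2*(t+2) - 2).descFactorial (2*k - 1) : ℚ) with hS2
  have hsub : ∑ k ∈ Icc 1 (t+2-1), cq k *
      (((2*(t+2)).descFactorial (2*k - 1) : ℚ) - ((2*(t+2) - 2).descFactorial (2*k - 1) : ℚ))
      = S1 - S2 := by
    rw [show t+2-1 = t+1 by omega, hS1, hS2, ← sum_sub_distrib]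
    exact sum_congr rfl fun k _ => by ring
  rw [hsub]
  rw [show t+1+1 = t+2 by omega] at h1
  set A : ℚ := 2*((t:ℚ)+2)+1 with hA
  set B : ℚ := 2*((t:ℚ)+1)+1 with hB
  set D : ℚ := ((2*(t+2)).descFactorial (2*(t+2) - 1) : ℚ) with hD
  have hAne : A ≠ 0 := by rw [hA]; positivity
  have hBne : B ≠ 0 := by rw [hB]; positivity
  have G' : (2*A*B) * (cq (t+2) * D) = 2 - 2*A*B*S1 + 2*A*B*S2 := by
    linear_combination (2*B) * h1 - (2*A) * h2
  have hinv : cq (t+2) * D = (2*A*B)⁻¹ * ((2*A*B) * (cq (t+2) * D)) := by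
    field_simp
  rw [hinv, G']
  have hc1 : 2*((t:ℚ)+2) - 1 = B := by rw [hB]; ring
  have hc2 : 2*((t:ℚ)+2) + 1 = A := by rw [hA]
  push_cast
  rw [hc1, hc2]
  field_simp
  ring

lemma eulerZeta_eq (k : ℕ) (hk : k ≠ 0) :
    eulerZeta (2 * k) = (-1 : ℝ) ^ k * π ^ (2 * k) * (cq k : ℝ) := by
  have hc := hasSum_one_div_nat_pow_mul_cos hk (x := 1/2) (by norm_num)
  have hcos : ∀ n : ℕ, Real.cos (2 * π * n * (1/2)) = (-1 : ℝ) ^ n := by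
    intro n
    rw [show 2 * π * (n:ℝ) * (1/2) = (n:ℝ) * π - 0 by ring, Real.cos_nat_mul_pi_sub,
      Real.cos_zero, mul_one]
  simp only [hcos] at hc
  set T : ℝ := (-1 : ℝ) ^ (k + 1) * (2 * π) ^ (2 * k) / 2 / (2 * k)! *
      Polynomial.eval (1/2 : ℝ) (Polynomial.map (algebraMap ℚ ℝ) (Polynomial.bernoulli (2 * k)))
    with hT
  have hshift : HasSum (fun n : ℕ => 1 / ((n:ℝ)+1) ^ (2 * k) * (-1 : ℝ) ^ (n+1)) (T - 0) := by
    have := (hasSum_nat_add_iff' (f := fun n : ℕ => 1 / (n:ℝ) ^ (2 * k) * (-1 : ℝ) ^ n) 1).mpr hc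
    simp only [range_one, sum_singleton, Nat.cast_zero, zero_pow (by omega : 2*k ≠ 0), div_zero,
      pow_zero, mul_one, zero_mul] at this
    convert (show HasSum (fun n : ℕ => 1 / ((n + 1 : ℕ) : ℝ) ^ (2 * k) * (-1 : ℝ) ^ (n+1)) (T - 0) from this) using 2 with n
    push_cast
    ring_nf
  rw [sub_zero] at hshift
  have hneg : HasSum (fun n : ℕ => (-1 : ℝ) ^ ((n + 1) - 1) / ((n:ℝ)+1) ^ (2 * k)) (-T) := by
    have : HasSum (fun n : ℕ => -(1 / ((n:ℝ)+1) ^ (2 * k) * (-1 : ℝ) ^ (n+1))) (-T) := hshift.neg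
    convert this using 2 with n
    rw [Nat.add_sub_cancel, pow_succ]
    ring
  rw [eulerZeta, hneg.tsum_eq, hT]
  have heval : Polynomial.eval (1/2 : ℝ) (Polynomial.map (algebraMap ℚ ℝ) (Polynomial.bernoulli (2 * k)))
      = ((Polynomial.eval (1/2 : ℚ) (Polynomial.bernoulli (2 * k)) : ℚ) : ℝ) := by
    rw [show (1/2 : ℝ) = algebraMap ℚ ℝ (1/2 : ℚ) by norm_num, Polynomial.eval_map,
      Polynomial.eval₂_at_apply]
    simp [Rat.cast_def]
  rw [heval, cq]
  have hfac : ((2*k)! : ℝ) ≠ 0 := mod_cast factorial_ne_zero (2*k)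
  push_cast
  rw [mul_pow]
  field_simp
  ring

theorem recurrence_formula (s : ℕ) (hs : 2 ≤ s) :
    eulerZeta (2 * s) =
      (-1 : ℝ) ^ s * π ^ (2 * s) / ((2 * s).descFactorial (2 * s - 1) : ℝ) *
        (1 / ((2 * (s : ℝ) - 1) * (2 * (s : ℝ) + 1)) -
          ∑ k ∈ Finset.Icc 1 (s - 1),
            (-1 : ℝ) ^ k * eulerZeta (2 * k) / π ^ (2 * k) *
              (((2 * s).descFactorial (2 * k - 1) : ℝ)
                - ((2 * s - 2).descFactorial (2 * k - 1) : ℝ))) := by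
  have hpi : (π : ℝ) ≠ 0 := Real.pi_ne_zero
  have hterm : ∀ k ∈ Icc 1 (s-1),
      (-1 : ℝ) ^ k * eulerZeta (2 * k) / π ^ (2 * k) *
        (((2 * s).descFactorial (2 * k - 1) : ℝ)
          - ((2 * s - 2).descFactorial (2 * k - 1) : ℝ))
      = (cq k : ℝ) * (((2 * s).descFactorial (2 * k - 1) : ℝ)
          - ((2 * s - 2).descFactorial (2 * k - 1) : ℝ)) := by
    intro k hk
    rw [eulerZeta_eq k (by have := (mem_Icc.mp hk).1; omega)]
    have hp : (π : ℝ) ^ (2*k) ≠ 0 := pow_ne_zero _ hpi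
    field_simp
    rw [← pow_mul, pow_mul']
    rw [neg_one_sq, one_pow]
    ring
  rw [sum_congr rfl hterm, eulerZeta_eq s (by omega)]
  have hF := Fq s hs
  have hFr : (cq s : ℝ) * ((2*s).descFactorial (2*s - 1) : ℝ) =
      1 / ((2*(s:ℝ) - 1) * (2*(s:ℝ) + 1)) -
        ∑ k ∈ Icc 1 (s - 1), (cq k : ℝ) *
          (((2*s).descFactorial (2*k - 1) : ℝ) - ((2*s - 2).descFactorial (2*k - 1) : ℝ)) := by
    have := congrArg (Rat.cast (K := ℝ)) hF
    push_cast at this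
    convert this using 2
  rw [← hFr]
  have hD : ((2 * s).descFactorial (2 * s - 1) : ℝ) ≠ 0 := by
    have : ¬ ((2 * s).descFactorial (2 * s - 1) = 0) := by
      rw [Nat.descFactorial_eq_zero_iff_lt]; omega
    exact_mod_cast this
  field_simp
end

section
/- For every integer s ≥ 2, ζ_E(2s) = ((-1)^s π^{2s} / (2s-1)) · ( 1/(2s+1)! − (1/s) ∑_{k=1}^{s-1} (-1)^k ζ_E(2k)/π^{2k} · (2k-1)(2s-k)/(2s-2k+1)! ), where ζ_E is the Euler zeta function. -/
open Real

open PowerSeries Finset Nat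


lemma bernoulli_poly_eval_half_odd {n : ℕ} (hn : Odd n) :
    (Polynomial.bernoulli n).eval (1/2 : ℚ) = 0 := by
  set F : ℚ⟦X⟧ := PowerSeries.mk fun n => Polynomial.aeval (1/2 : ℚ) ((1 / n ! : ℚ) • Polynomial.bernoulli n) with hF
  have hgen : F * (exp ℚ - 1) = X * rescale (1/2 : ℚ) (exp ℚ) :=
    Polynomial.bernoulli_generating_function (1/2 : ℚ)
  have hre : rescale (-1 : ℚ) F * (rescale (-1 : ℚ) (exp ℚ) - 1)
      = (-X) * rescale (-(1/2) : ℚ) (exp ℚ) := by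
    have := congrArg (rescale (-1 : ℚ)) hgen
    simpa [map_mul, map_sub, map_one, rescale_neg_one_X, rescale_rescale,
      show (1/2 : ℚ) * (-1) = -(1/2) by norm_num] using this
  have hneg : rescale (-1 : ℚ) (exp ℚ) * exp ℚ = 1 := by
    have := exp_mul_exp_eq_exp_add (-1 : ℚ) 1
    simpa [rescale_one, rescale_zero] using this
  have key : rescale (-1 : ℚ) F * (exp ℚ - 1) = F * (exp ℚ - 1) := by
    have h1 : rescale (-1 : ℚ) F * (rescale (-1 : ℚ) (exp ℚ) - 1) * exp ℚ
        = (-X) * rescale (-(1/2) : ℚ) (exp ℚ) * exp ℚ := by rw [hre]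
    have h2 : rescale (-(1/2) : ℚ) (exp ℚ) * exp ℚ = rescale (1/2 : ℚ) (exp ℚ) := by
      have h := exp_mul_exp_eq_exp_add (-(1/2) : ℚ) 1
      rw [show (-(1/2 : ℚ) + 1) = 1/2 by norm_num] at h
      simpa [rescale_one] using h
    calc rescale (-1 : ℚ) F * (exp ℚ - 1)
        = -(rescale (-1 : ℚ) F * (rescale (-1 : ℚ) (exp ℚ) - 1) * exp ℚ) := by
          rw [mul_assoc, sub_mul, hneg, one_mul]; ring
      _ = -((-X) * rescale (-(1/2) : ℚ) (exp ℚ) * exp ℚ) := by rw [h1]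
      _ = X * rescale (1/2 : ℚ) (exp ℚ) := by rw [mul_assoc, h2]; ring
      _ = F * (exp ℚ - 1) := hgen.symm
  have hne : (exp ℚ - 1 : ℚ⟦X⟧) ≠ 0 := by
    intro h
    have := congrArg (PowerSeries.coeff 1) h
    simp [coeff_exp] at this
  have hFF : rescale (-1 : ℚ) F = F := mul_right_cancel₀ hne key
  have := congrArg (PowerSeries.coeff n) hFF
  rw [coeff_rescale] at this
  rw [hn.neg_one_pow] at this
  simp only [hF, coeff_mk, map_smul, Polynomial.aeval_def] at this
  have hfac : (1 / (n ! : ℚ)) ≠ 0 := by positivity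
  have : -( (1 / (n ! : ℚ)) * Polynomial.eval (1/2 : ℚ) (Polynomial.bernoulli n))
      = (1 / (n ! : ℚ)) * Polynomial.eval (1/2 : ℚ) (Polynomial.bernoulli n) := by
    simpa [Polynomial.eval₂_eq_eval_map, smul_eq_mul] using this
  have h0 : (1 / (n ! : ℚ)) * Polynomial.eval (1/2 : ℚ) (Polynomial.bernoulli n) = 0 := by
    linarith [this]
  field_simp at h0
  simpa using h0

lemma sum_choose_two_pow_bernoulli {m : ℕ} (hm : Odd m) :
    ∑ j ∈ range (m + 1), (m.choose j : ℚ) * 2 ^ j * _root_.bernoulli j = 0 := by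
  have h1 : ((2 : ℚ) ^ m) * (Polynomial.bernoulli m).eval (1/2 : ℚ) = 0 := by
    rw [bernoulli_poly_eval_half_odd hm, mul_zero]
  rw [Polynomial.bernoulli, Polynomial.eval_finset_sum] at h1
  rw [Finset.mul_sum] at h1
  rw [← h1]
  apply Finset.sum_congr rfl
  intro i hi
  rw [Finset.mem_range] at hi
  have hile : i ≤ m := Nat.lt_succ_iff.mp hi
  rw [Polynomial.eval_monomial]
  have : (2 : ℚ) ^ m = 2 ^ i * 2 ^ (m - i) := by
    rw [← pow_add]; congr 1; omega
  rw [this]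
  rw [one_div, inv_pow]
  field_simp

lemma sum_choose_bernoulli {m : ℕ} (hm : Odd m) (hm3 : 3 ≤ m) :
    ∑ j ∈ range (m + 1), (m.choose j : ℚ) * _root_.bernoulli j = 0 := by
  rw [Finset.sum_range_succ]
  have h1 : ∑ j ∈ range m, (m.choose j : ℚ) * _root_.bernoulli j = 0 := by
    rw [sum_bernoulli]
    simp only [ite_eq_right_iff]
    intro h; omega
  have h2 : _root_.bernoulli m = 0 := by
    rw [bernoulli_eq_bernoulli'_of_ne_one (by omega)]
    exact bernoulli'_eq_zero_of_odd hm (by omega)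
  simp [h1, h2]

lemma sum_range_two_mul (f : ℕ → ℚ) (n : ℕ) :
    ∑ j ∈ range (2 * n), f j = ∑ i ∈ range n, f (2 * i) + ∑ i ∈ range n, f (2 * i + 1) := by
  induction n with
  | zero => simp
  | succ n ih =>
    rw [show 2 * (n + 1) = 2 * n + 1 + 1 by ring, Finset.sum_range_succ, Finset.sum_range_succ,
      ih, Finset.sum_range_succ, Finset.sum_range_succ]
    ring

lemma bsum {m : ℕ} (hm : 1 ≤ m) :
    ∑ k ∈ range (m + 1), ((2:ℚ) ^ (2 * k) - 2) * _root_.bernoulli (2 * k) * ((2 * m + 1).choose (2 * k)) = 0 := by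
  set f : ℕ → ℚ := fun j => ((2:ℚ) ^ j - 2) * _root_.bernoulli j * ((2 * m + 1).choose j) with hf
  have hodd : ∀ i ∈ range (m + 1), f (2 * i + 1) = 0 := by
    intro i _
    by_cases hi : i = 0
    · simp [hf, hi]
    · have : _root_.bernoulli (2 * i + 1) = 0 := by
        rw [bernoulli_eq_bernoulli'_of_ne_one (by omega)]
        exact bernoulli'_eq_zero_of_odd ⟨i, by ring⟩ (by omega)
      simp [hf, this]
  have hsplit : ∑ j ∈ range (2 * (m + 1)), f j
      = ∑ i ∈ range (m + 1), f (2 * i) + ∑ i ∈ range (m + 1), f (2 * i + 1) :=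
    sum_range_two_mul f (m + 1)
  have hoddsum : ∑ i ∈ range (m + 1), f (2 * i + 1) = 0 :=
    Finset.sum_eq_zero hodd
  have hfull : ∑ j ∈ range (2 * (m + 1)), f j = 0 := by
    have hexp : ∀ j, f j = ((2 * m + 1).choose j : ℚ) * 2 ^ j * _root_.bernoulli j
        - 2 * (((2 * m + 1).choose j : ℚ) * _root_.bernoulli j) := by
      intro j; rw [hf]; ring
    have h2m : 2 * (m + 1) = (2 * m + 1) + 1 := by ring
    rw [h2m]
    calc ∑ j ∈ range (2 * m + 1 + 1), f j
        = ∑ j ∈ range (2 * m + 1 + 1), (((2 * m + 1).choose j : ℚ) * 2 ^ j * _root_.bernoulli j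
            - 2 * (((2 * m + 1).choose j : ℚ) * _root_.bernoulli j)) := by
          exact Finset.sum_congr rfl fun j _ => hexp j
      _ = (∑ j ∈ range (2 * m + 1 + 1), ((2 * m + 1).choose j : ℚ) * 2 ^ j * _root_.bernoulli j)
            - 2 * ∑ j ∈ range (2 * m + 1 + 1), ((2 * m + 1).choose j : ℚ) * _root_.bernoulli j := by
          rw [Finset.sum_sub_distrib, Finset.mul_sum]
      _ = 0 := by
          rw [sum_choose_two_pow_bernoulli ⟨m, by ring⟩, sum_choose_bernoulli ⟨m, by ring⟩ (by omega)]
          ring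
  have := hsplit.symm.trans hfull
  rw [hoddsum, add_zero] at this
  simpa [hf] using this

lemma T1Q {m : ℕ} (hm : 1 ≤ m) :
    ∑ k ∈ range (m + 1), ((2:ℚ) ^ (2 * k) - 2) * _root_.bernoulli (2 * k) /
      ((2 * k)! * (2 * (m - k) + 1)!) = 0 := by
  have h : ∀ k ∈ range (m + 1), ((2:ℚ) ^ (2 * k) - 2) * _root_.bernoulli (2 * k) /
      ((2 * k)! * (2 * (m - k) + 1)!)
      = ((2:ℚ) ^ (2 * k) - 2) * _root_.bernoulli (2 * k) * ((2 * m + 1).choose (2 * k)) / (2 * m + 1)! := by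
    intro k hk
    rw [Finset.mem_range] at hk
    have hkle : 2 * k ≤ 2 * m + 1 := by omega
    have hch := Nat.choose_mul_factorial_mul_factorial hkle
    have h2 : 2 * m + 1 - 2 * k = 2 * (m - k) + 1 := by omega
    rw [h2] at hch
    have hcast : (((2 * m + 1).choose (2 * k) : ℚ)) * (2 * k)! * (2 * (m - k) + 1)! = (2 * m + 1)! := by
      exact_mod_cast congrArg (Nat.cast : ℕ → ℚ) hch
    have hx : ((2 * k)! : ℚ) ≠ 0 := by exact_mod_cast (Nat.factorial_pos _).ne'
    have hy : ((2 * (m - k) + 1)! : ℚ) ≠ 0 := by exact_mod_cast (Nat.factorial_pos _).ne'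
    have hF : ((2 * m + 1)! : ℚ) ≠ 0 := by exact_mod_cast (Nat.factorial_pos _).ne'
    field_simp
    linear_combination (-((2:ℚ) ^ (2 * k) - 2) * _root_.bernoulli (2 * k)) * hcast
  rw [Finset.sum_congr rfl h, ← Finset.sum_div, bsum hm, zero_div]

lemma T1R {m : ℕ} (hm : 1 ≤ m) :
    ∑ k ∈ range (m + 1), ((2:ℝ) ^ (2 * k) - 2) * (_root_.bernoulli (2 * k) : ℝ) /
      ((2 * k)! * (2 * (m - k) + 1)!) = 0 := by
  have h := congrArg (Rat.cast : ℚ → ℝ) (T1Q hm)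
  push_cast at h
  exact_mod_cast h

lemma eulerZeta_two_mul {n : ℕ} (hn : 1 ≤ n) :
    eulerZeta (2 * n) = (-1 : ℝ) ^ (n + 1) * ((2:ℝ) ^ (2 * n - 1) - 1) * π ^ (2 * n) *
      (_root_.bernoulli (2 * n) : ℝ) / (2 * n)! := by
  set Z : ℝ := (-1 : ℝ) ^ (n + 1) * (2 : ℝ) ^ (2 * n - 1) * π ^ (2 * n) *
      (_root_.bernoulli (2 * n) : ℝ) / (2 * n)! with hZ
  have h0 : HasSum (fun j : ℕ => 1 / (j : ℝ) ^ (2 * n)) Z := hasSum_zeta_nat (by omega)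
  set F : ℕ → ℝ := fun j => 1 / ((j : ℝ) + 1) ^ (2 * n) with hFdef
  have h1 : HasSum F Z := by
    have h1' : HasSum (fun j : ℕ => 1 / ((j + 1 : ℕ) : ℝ) ^ (2 * n)) Z := by
      refine (hasSum_nat_add_iff (f := fun j : ℕ => 1 / (j : ℝ) ^ (2 * n)) 1).mpr ?_
      have : ∑ i ∈ Finset.range 1, 1 / (i : ℝ) ^ (2 * n) = 0 := by
        simp [zero_pow (by omega : 2 * n ≠ 0)]
      rw [this, add_zero]; exact h0
    convert h1' using 2 with j
    push_cast; ring
  have hH : HasSum (fun j : ℕ => if Odd j then F j else 0) (((2:ℝ)⁻¹) ^ (2 * n) * Z) := by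
    have hi : Function.Injective (fun m : ℕ => 2 * m + 1) := by
      intro a b hab
      simp only [] at hab
      omega
    have hz : ∀ x ∉ Set.range (fun m : ℕ => 2 * m + 1), (if Odd x then F x else 0) = 0 := by
      intro x hx
      have hno : ¬ Odd x := by
        rintro ⟨c, hc⟩
        refine hx ⟨c, ?_⟩
        simp only []
        omega
      simp [hno]
    refine (Function.Injective.hasSum_iff hi hz).mp ?_
    have hml := h1.mul_left (((2:ℝ)⁻¹) ^ (2 * n))
    convert hml using 1
    · rfl
    funext m
    have hodd : Odd (2 * m + 1) := ⟨m, by ring⟩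
    simp only [Function.comp_apply, if_pos hodd]
    have hFv : ∀ j : ℕ, F j = 1 / ((j : ℝ) + 1) ^ (2 * n) := fun j => rfl
    rw [hFv, hFv]
    have h2 : ((2 * m + 1 : ℕ) : ℝ) + 1 = 2 * ((m : ℝ) + 1) := by push_cast; ring
    rw [h2, mul_pow]
    have hm1 : ((m : ℝ) + 1) ^ (2 * n) ≠ 0 := by positivity
    field_simp
    rw [← mul_pow]; norm_num
  have hfin : HasSum (fun j : ℕ => (-1:ℝ) ^ j / ((j : ℝ) + 1) ^ (2 * n))
      (Z - 2 * (((2:ℝ)⁻¹) ^ (2 * n) * Z)) := by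
    have := h1.sub (hH.mul_left 2)
    convert this using 1
    · rfl
    funext j
    have hFv : F j = 1 / ((j : ℝ) + 1) ^ (2 * n) := rfl
    rcases Nat.even_or_odd j with he | ho
    · have hno : ¬ Odd j := Nat.not_odd_iff_even.mpr he
      rw [if_neg hno, mul_zero, sub_zero, he.neg_one_pow, hFv]
    · rw [if_pos ho, ho.neg_one_pow, hFv]
      ring
  have heq : eulerZeta (2 * n) = Z - 2 * (((2:ℝ)⁻¹) ^ (2 * n) * Z) := by
    rw [eulerZeta]
    rw [← hfin.tsum_eq]
    apply tsum_congr
    intro j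
    simp
  rw [heq, hZ]
  obtain ⟨t, rfl⟩ : ∃ t, n = t + 1 := ⟨n - 1, by omega⟩
  have hsub : 2 * (t + 1) - 1 = 2 * t + 1 := by omega
  rw [hsub]
  have hfac : ((2 * (t + 1))! : ℝ) ≠ 0 := by exact_mod_cast (Nat.factorial_pos _).ne'
  field_simp
  have hh : (2:ℝ) ^ (2 * t + 1) * (1/2) ^ (2 * t + 1) = 1 := by rw [← mul_pow]; norm_num
  linear_combination (-((_root_.bernoulli (2 * (t + 1)) : ℚ) : ℝ)) * hh

lemma key_sum (s : ℕ) (hs : 2 ≤ s) :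
    ∑ k ∈ Finset.Icc 1 (s - 1),
        ((2:ℝ) ^ (2 * k) - 2) * (_root_.bernoulli (2 * k) : ℝ) / ((2 * k)! * (2 * (s - k) + 1)!) *
          ((2 * (k:ℝ) - 1) * (2 * (s:ℝ) - (k:ℝ)))
      = -(2 * (s:ℝ) / (2 * s + 1)! +
          (s:ℝ) * (2 * (s:ℝ) - 1) *
            (((2:ℝ) ^ (2 * s) - 2) * (_root_.bernoulli (2 * s) : ℝ) / (2 * s)!)) := by
  set e : ℕ → ℝ := fun k =>
    ((2:ℝ) ^ (2 * k) - 2) * (_root_.bernoulli (2 * k) : ℝ) / ((2 * k)! * (2 * (s - k) + 1)!) with he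
  set f : ℕ → ℝ := fun k =>
    ((2:ℝ) ^ (2 * k) - 2) * (_root_.bernoulli (2 * k) : ℝ) / ((2 * k)! * (2 * ((s - 1) - k) + 1)!) with hf
  set w : ℕ → ℝ := fun k => (2 * (k:ℝ) - 1) * (2 * (s:ℝ) - (k:ℝ)) with hw
  have hT1s : ∑ k ∈ Finset.range (s + 1), e k = 0 := T1R (by omega)
  have hT1s1 : ∑ k ∈ Finset.range ((s - 1) + 1), f k = 0 := T1R (by omega)
  have hs1 : (s - 1) + 1 = s := by omega
  rw [hs1] at hT1s1
  -- per-term identity for k < s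
  have hterm : ∀ k ∈ Finset.range s, e k * w k = (s:ℝ) * (2 * (s:ℝ) - 1) * e k - (1/2) * f k := by
    intro k hk
    rw [Finset.mem_range] at hk
    obtain ⟨j, hj⟩ : ∃ j, s = k + j + 1 := ⟨s - k - 1, by omega⟩
    have h1 : s - k = j + 1 := by omega
    have h2 : s - 1 - k = j := by omega
    have h3 : 2 * (j + 1) + 1 = (2 * j + 2) + 1 := by ring
    have hfac : ((2 * (j + 1) + 1)! : ℝ) = (2 * j + 3) * ((2 * j + 2) * (2 * j + 1)!) := by
      rw [h3, Nat.factorial_succ, Nat.factorial_succ]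
      push_cast; ring
    have hsr : (s : ℝ) = (k : ℝ) + (j : ℝ) + 1 := by rw [hj]; push_cast; ring
    rw [he, hf, hw]
    simp only []
    rw [h1, h2, hfac, hsr]
    have hx : ((2 * k)! : ℝ) ≠ 0 := by exact_mod_cast (Nat.factorial_pos _).ne'
    have hy : ((2 * j + 1)! : ℝ) ≠ 0 := by exact_mod_cast (Nat.factorial_pos _).ne'
    field_simp
    ring
  have hws : w s = (s:ℝ) * (2 * (s:ℝ) - 1) := by rw [hw]; ring
  have hEsum : ∑ k ∈ Finset.range (s + 1), e k * w k = 0 := by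
    rw [Finset.sum_range_succ, Finset.sum_congr rfl hterm, Finset.sum_sub_distrib,
      ← Finset.mul_sum, ← Finset.mul_sum, hT1s1, hws]
    have : ∑ k ∈ Finset.range s, e k = - e s := by
      have := hT1s
      rw [Finset.sum_range_succ] at this
      linarith
    rw [this]
    ring
  -- split off k = 0 and k = s
  have hIcc : ∑ k ∈ Finset.Icc 1 (s - 1), e k * w k
      = ∑ i ∈ Finset.range (s - 1), e (1 + i) * w (1 + i) := by
    rw [← Finset.Ico_add_one_right_eq_Icc, show (s - 1) + 1 = s by omega, Finset.sum_Ico_eq_sum_range]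
  have hrange : ∑ k ∈ Finset.range s, e k * w k
      = e 0 * w 0 + ∑ i ∈ Finset.range (s - 1), e (1 + i) * w (1 + i) := by
    have h := Finset.sum_range_succ' (fun k => e k * w k) (s - 1)
    rw [show s - 1 + 1 = s by omega] at h
    rw [h, add_comm]
    congr 1
    exact Finset.sum_congr rfl fun i _ => by rw [add_comm 1 i]
  have hsplit : ∑ k ∈ Finset.range (s + 1), e k * w k
      = e 0 * w 0 + (∑ k ∈ Finset.Icc 1 (s - 1), e k * w k) + e s * w s := by
    rw [Finset.sum_range_succ, hrange, hIcc]
  have he0 : e 0 * w 0 = 2 * (s:ℝ) / (2 * s + 1)! := by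
    rw [he, hw]
    simp only []
    rw [show s - 0 = s by omega]
    norm_num [bernoulli_zero]
    ring
  have hes : e s * w s = (s:ℝ) * (2 * (s:ℝ) - 1) *
      (((2:ℝ) ^ (2 * s) - 2) * (_root_.bernoulli (2 * s) : ℝ) / (2 * s)!) := by
    rw [hws, he]
    simp only []
    rw [show s - s = 0 by omega]
    norm_num [Nat.factorial]
    ring
  rw [hsplit, he0, hes] at hEsum
  linarith [hEsum]

theorem recurrence_corollary (s : ℕ) (hs : 2 ≤ s) :
    eulerZeta (2 * s) =
      (-1 : ℝ) ^ s * π ^ (2 * s) / (2 * (s : ℝ) - 1) *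
        (1 / ((Nat.factorial (2 * s + 1)) : ℝ) -
          (1 / (s : ℝ)) *
            ∑ k ∈ Finset.Icc 1 (s - 1),
              (-1 : ℝ) ^ k * eulerZeta (2 * k) / π ^ (2 * k) *
                ((2 * (k : ℝ) - 1) * (2 * (s : ℝ) - (k : ℝ)) / ((Nat.factorial (2 * s - 2 * k + 1)) : ℝ))) := by
  have hπ : (π : ℝ) ≠ 0 := Real.pi_ne_zero
  have hsummand : ∀ k ∈ Finset.Icc 1 (s - 1),
      (-1 : ℝ) ^ k * eulerZeta (2 * k) / π ^ (2 * k) *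
          ((2 * (k : ℝ) - 1) * (2 * (s : ℝ) - (k : ℝ)) / ((Nat.factorial (2 * s - 2 * k + 1)) : ℝ))
      = -(1/2) * (((2:ℝ) ^ (2 * k) - 2) * (_root_.bernoulli (2 * k) : ℝ) /
          ((2 * k)! * (2 * (s - k) + 1)!) * ((2 * (k:ℝ) - 1) * (2 * (s:ℝ) - (k:ℝ)))) := by
    intro k hk
    rw [Finset.mem_Icc] at hk
    obtain ⟨hk1, hk2⟩ := hk
    rw [eulerZeta_two_mul hk1]
    rw [show 2 * s - 2 * k + 1 = 2 * (s - k) + 1 by omega]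
    have hp2 : (2:ℝ) ^ (2 * k) = 2 * 2 ^ (2 * k - 1) := by
      rw [show 2 * k = (2 * k - 1) + 1 by omega, _root_.pow_succ']
      norm_num
    have hne : (π:ℝ) ^ (2 * k) ≠ 0 := pow_ne_zero _ hπ
    have hx : ((2 * k)! : ℝ) ≠ 0 := by exact_mod_cast (Nat.factorial_pos _).ne'
    have hy : ((2 * (s - k) + 1)! : ℝ) ≠ 0 := by exact_mod_cast (Nat.factorial_pos _).ne'
    rw [hp2]
    rcases Nat.even_or_odd k with hpar | hpar
    · rw [hpar.neg_one_pow, (hpar.add_one).neg_one_pow]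
      field_simp
    · rw [hpar.neg_one_pow, (hpar.add_one).neg_one_pow]
      field_simp
  rw [Finset.sum_congr rfl hsummand, ← Finset.mul_sum, key_sum s hs]
  rw [eulerZeta_two_mul (show 1 ≤ s by omega)]
  have h2s : (2:ℝ) ^ (2 * s) = 2 * 2 ^ (2 * s - 1) := by
    rw [show 2 * s = (2 * s - 1) + 1 by omega, _root_.pow_succ']
    norm_num
  rw [h2s]
  have hs0 : (s : ℝ) ≠ 0 := by
    have : (0:ℝ) < s := by exact_mod_cast (by omega : 0 < s)
    exact this.ne'
  have hsge : (2:ℝ) ≤ (s:ℝ) := by exact_mod_cast hs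
  have h2s1 : 2 * (s:ℝ) - 1 ≠ 0 := by
    intro h; nlinarith
  have hf1 : ((2 * s)! : ℝ) ≠ 0 := by exact_mod_cast (Nat.factorial_pos _).ne'
  have hf2 : ((2 * s + 1)! : ℝ) ≠ 0 := by exact_mod_cast (Nat.factorial_pos _).ne'
  rcases Nat.even_or_odd s with hpar | hpar
  · rw [hpar.neg_one_pow, (hpar.add_one).neg_one_pow]
    field_simp
    ring
  · rw [hpar.neg_one_pow, (hpar.add_one).neg_one_pow]
    field_simp
    ring
end

section
/- For every positive integer m and every real x with -2 < x < 2, x^{2m} = 2^{2m}/(2m+1) + ∑_{n=1}^∞ a_n cos(nπx/2), where a_n = ∑_{k=1}^{m} (-1)^{k+1} P(2m, 2k-1) · 2^{2m-2k+1} · 2^{2k}/(n^{2k} π^{2k}) · cos(nπ) and P(n,r) = n!/(n-r)!. -/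
open Real Finset

noncomputable def Bfn (n : ℕ) (x : ℝ) : ℝ :=
  ((Polynomial.bernoulli n).map (algebraMap ℚ ℝ)).eval x

lemma Bfn_expand (n : ℕ) (x : ℝ) :
    Bfn n x = ∑ i ∈ Finset.range (n + 1),
      ((_root_.bernoulli i : ℚ) : ℝ) * (n.choose i : ℝ) * x ^ (n - i) := by
  simp [Bfn, Polynomial.bernoulli, Polynomial.map_sum, Polynomial.map_monomial,
    Polynomial.eval_finset_sum, Polynomial.eval_monomial]

lemma Bfn_add (n : ℕ) (x y : ℝ) :
    Bfn n (x + y) = ∑ j ∈ Finset.range (n + 1), (n.choose j : ℝ) * Bfn j x * y ^ (n - j) := by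
  rw [Bfn_expand]
  have L : ∀ i ∈ Finset.range (n + 1),
      ((_root_.bernoulli i : ℚ) : ℝ) * (n.choose i : ℝ) * (x + y) ^ (n - i)
        = ∑ l ∈ Finset.range (n - i + 1),
          ((_root_.bernoulli i : ℚ) : ℝ) * (n.choose i : ℝ) * ((n - i).choose l : ℝ)
            * x ^ l * y ^ (n - i - l) := by
    intro i _
    rw [add_pow]
    rw [Finset.mul_sum]
    refine Finset.sum_congr rfl fun l _ => by ring
  rw [Finset.sum_congr rfl L]
  have R : ∀ j ∈ Finset.range (n + 1),
      (n.choose j : ℝ) * Bfn j x * y ^ (n - j)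
        = ∑ i ∈ Finset.range (j + 1),
          (n.choose j : ℝ) * (((_root_.bernoulli i : ℚ) : ℝ) * (j.choose i : ℝ) * x ^ (j - i))
            * y ^ (n - j) := by
    intro j _
    rw [Bfn_expand, Finset.mul_sum, Finset.sum_mul]
  rw [Finset.sum_congr rfl R]
  rw [Finset.sum_sigma', Finset.sum_sigma']
  refine Finset.sum_nbij' (fun p => ⟨p.1 + p.2, p.1⟩) (fun p => ⟨p.2, p.1 - p.2⟩) ?_ ?_ ?_ ?_ ?_
  · rintro ⟨i, l⟩ h
    simp only [Finset.mem_sigma, Finset.mem_range] at h ⊢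
    omega
  · rintro ⟨j, i⟩ h
    simp only [Finset.mem_sigma, Finset.mem_range] at h ⊢
    omega
  · rintro ⟨i, l⟩ h
    simp
  · rintro ⟨j, i⟩ h
    simp only [Finset.mem_sigma, Finset.mem_range] at h
    ext <;> simp <;> omega
  · rintro ⟨i, l⟩ h
    simp only [Finset.mem_sigma, Finset.mem_range] at h
    have h1 : i + l ≤ n := by omega
    have h2 : i ≤ i + l := by omega
    have key : n.choose (i + l) * (i + l).choose i = n.choose i * (n - i).choose l := by
      have := Nat.choose_mul (n := n) h2
      simpa using this
    have keyR : ((n.choose (i + l) : ℝ)) * ((i + l).choose i : ℝ)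
        = (n.choose i : ℝ) * ((n - i).choose l : ℝ) := by exact_mod_cast key
    have e1 : i + l - i = l := by omega
    have e2 : n - i - l = n - (i + l) := by omega
    simp only []
    rw [e1, e2]
    push_cast at keyR ⊢
    linear_combination (-((_root_.bernoulli i : ℚ) : ℝ)) * x ^ l * y ^ (n - (i + l)) * keyR

lemma Bfn_one_add (n : ℕ) (x : ℝ) : Bfn n (1 + x) = Bfn n x + n * x ^ (n - 1) := by
  have hpoly : (Polynomial.bernoulli n).comp (1 + Polynomial.X) =
      Polynomial.bernoulli n + (n : Polynomial ℚ) * Polynomial.X ^ (n - 1) := by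
    apply Polynomial.funext
    intro r
    simp [Polynomial.eval_comp, Polynomial.bernoulli_eval_one_add]
  have h2 := congrArg (fun p => (Polynomial.map (algebraMap ℚ ℝ) p).eval x) hpoly
  simpa [Polynomial.map_comp, Polynomial.eval_comp, Polynomial.map_add, Polynomial.map_mul,
    Polynomial.map_pow, Polynomial.map_natCast, Polynomial.map_one, Bfn] using h2

lemma sum_range_even_odd (g : ℕ → ℝ) (m : ℕ) :
    ∑ j ∈ Finset.range (2 * m), g j = ∑ k ∈ Finset.range m, (g (2 * k) + g (2 * k + 1)) := by
  induction m with
  | zero => simp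
  | succ m ih =>
    have h : 2 * (m + 1) = 2 * m + 1 + 1 := by ring
    rw [h, Finset.sum_range_succ, Finset.sum_range_succ, ih, Finset.sum_range_succ]
    ring

lemma key_identity (m : ℕ) (v : ℝ) :
    ∑ k ∈ Finset.range (m + 1), ((2 * m + 1).choose (2 * k) : ℝ) * 4 ^ k * Bfn (2 * k) v
      = (2 * (m : ℝ) + 1) * (2 * v - 1) ^ (2 * m) := by
  have hT : (2 : ℝ) ^ (2 * m + 1) * Bfn (2 * m + 1) (v + 1 / 2)
      = ∑ j ∈ Finset.range (2 * m + 2), ((2 * m + 1).choose j : ℝ) * 2 ^ j * Bfn j v := by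
    rw [Bfn_add (2 * m + 1) v (1 / 2), Finset.mul_sum]
    refine Finset.sum_congr rfl fun j hj => ?_
    rw [Finset.mem_range] at hj
    have hsplit : (2 : ℝ) ^ (2 * m + 1) = 2 ^ (2 * m + 1 - j) * 2 ^ j := by
      rw [← pow_add]; congr 1; omega
    have h12 : ((1 : ℝ) / 2) ^ (2 * m + 1 - j) * 2 ^ (2 * m + 1 - j) = 1 := by
      rw [← mul_pow]; norm_num
    rw [hsplit]
    linear_combination (((2 * m + 1).choose j : ℝ) * Bfn j v * 2 ^ j) * h12
  have hU : (-2 : ℝ) ^ (2 * m + 1) * Bfn (2 * m + 1) (v - 1 / 2)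
      = ∑ j ∈ Finset.range (2 * m + 2), ((2 * m + 1).choose j : ℝ) * (-2) ^ j * Bfn j v := by
    have hv : v - 1 / 2 = v + -(1 / 2) := by ring
    rw [hv, Bfn_add (2 * m + 1) v (-(1 / 2)), Finset.mul_sum]
    refine Finset.sum_congr rfl fun j hj => ?_
    rw [Finset.mem_range] at hj
    have hsplit : (-2 : ℝ) ^ (2 * m + 1) = (-2) ^ (2 * m + 1 - j) * (-2) ^ j := by
      rw [← pow_add]; congr 1; omega
    have h12 : (-((1 : ℝ) / 2)) ^ (2 * m + 1 - j) * (-2) ^ (2 * m + 1 - j) = 1 := by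
      rw [← mul_pow]; norm_num
    rw [hsplit]
    linear_combination (((2 * m + 1).choose j : ℝ) * Bfn j v * (-2) ^ j) * h12
  have hsum : ∑ j ∈ Finset.range (2 * m + 2), ((2 * m + 1).choose j : ℝ) * 2 ^ j * Bfn j v
      + ∑ j ∈ Finset.range (2 * m + 2), ((2 * m + 1).choose j : ℝ) * (-2) ^ j * Bfn j v
      = 2 * ∑ k ∈ Finset.range (m + 1), ((2 * m + 1).choose (2 * k) : ℝ) * 4 ^ k * Bfn (2 * k) v := by
    rw [← Finset.sum_add_distrib]
    have h : (2 * m + 2) = 2 * (m + 1) := by ring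
    rw [h, sum_range_even_odd, Finset.mul_sum]
    refine Finset.sum_congr rfl fun k _ => ?_
    have h2 : (-2 : ℝ) ^ (2 * k) = 4 ^ k := by
      rw [show (4 : ℝ) = (-2) ^ 2 by norm_num, ← pow_mul]
    have h3 : (2 : ℝ) ^ (2 * k) = 4 ^ k := by
      rw [show (4 : ℝ) = 2 ^ 2 by norm_num, ← pow_mul]
    have h4 : (-2 : ℝ) ^ (2 * k + 1) = -(2 ^ (2 * k + 1)) :=
      Odd.neg_pow ⟨k, by ring⟩ 2
    linear_combination (((2 * m + 1).choose (2 * k) : ℝ) * Bfn (2 * k) v) * h3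
      + (((2 * m + 1).choose (2 * k) : ℝ) * Bfn (2 * k) v) * h2
      + (((2 * m + 1).choose (2 * k + 1) : ℝ) * Bfn (2 * k + 1) v) * h4
  have main : (2 : ℝ) ^ (2 * m + 1) * Bfn (2 * m + 1) (v + 1 / 2)
      + (-2 : ℝ) ^ (2 * m + 1) * Bfn (2 * m + 1) (v - 1 / 2)
      = 2 * ∑ k ∈ Finset.range (m + 1), ((2 * m + 1).choose (2 * k) : ℝ) * 4 ^ k * Bfn (2 * k) v := by
    rw [hT, hU, hsum]
  have hodd : (-2 : ℝ) ^ (2 * m + 1) = -(2 ^ (2 * m + 1)) := Odd.neg_pow ⟨m, by ring⟩ 2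
  have hshift : v + 1 / 2 = 1 + (v - 1 / 2) := by ring
  have hBadd : Bfn (2 * m + 1) (v + 1 / 2)
      = Bfn (2 * m + 1) (v - 1 / 2) + (2 * (m : ℝ) + 1) * (v - 1 / 2) ^ (2 * m) := by
    rw [hshift, Bfn_one_add, Nat.add_sub_cancel]
    push_cast
    ring
  have hpow : (2 * v - 1) ^ (2 * m) = 2 ^ (2 * m) * (v - 1 / 2) ^ (2 * m) := by
    rw [← mul_pow]; ring_nf
  rw [hodd, hBadd, pow_succ] at main
  linear_combination (-(1 : ℝ) / 2) * main - (2 * (m : ℝ) + 1) * hpow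

lemma Bfn_zero_eval (t : ℝ) : Bfn 0 t = 1 := by
  simp [Bfn]

theorem fourier_series_x_pow (m : ℕ) (hm : 0 < m) (x : ℝ) (hx1 : -2 < x) (hx2 : x < 2) :
    x ^ (2 * m) = 2 ^ (2 * m) / (2 * (m : ℝ) + 1) +
      ∑' n : ℕ,
        (∑ k ∈ Finset.Icc 1 m,
            (-1 : ℝ) ^ (k + 1) * ((2 * m).descFactorial (2 * k - 1) : ℝ) *
              2 ^ (2 * m - 2 * k + 1) * (2 ^ (2 * k) / (((n : ℝ) + 1) ^ (2 * k) * π ^ (2 * k))) *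
              Real.cos (((n : ℝ) + 1) * π)) *
          Real.cos (((n : ℝ) + 1) * π * x / 2) := by
  have hπ : π ≠ 0 := Real.pi_ne_zero
  set t : ℝ := (x + 2) / 4 with htdef
  have ht : t ∈ Set.Icc (0 : ℝ) 1 := by
    constructor
    · simp only [htdef]; linarith
    · simp only [htdef]; linarith
  have hks : ∀ k ∈ Finset.Icc 1 m,
      HasSum (fun n : ℕ =>
        ((-1 : ℝ) ^ (k + 1) * ((2 * m).descFactorial (2 * k - 1) : ℝ) *
          2 ^ (2 * m - 2 * k + 1) * (2 ^ (2 * k) / (((n : ℝ) + 1) ^ (2 * k) * π ^ (2 * k))) *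
          Real.cos (((n : ℝ) + 1) * π)) * Real.cos (((n : ℝ) + 1) * π * x / 2))
        (2 ^ (2 * m) / (2 * (m : ℝ) + 1) *
          (((2 * m + 1).choose (2 * k) : ℝ) * 4 ^ k * Bfn (2 * k) t)) := by
    intro k hk
    obtain ⟨hk1, hkm⟩ := Finset.mem_Icc.mp hk
    have hk0 : k ≠ 0 := by omega
    have h0 := hasSum_one_div_nat_pow_mul_cos hk0 ht
    have h1 : HasSum (fun n : ℕ => 1 / ((n : ℝ) + 1) ^ (2 * k) *
        Real.cos (2 * π * ((n : ℝ) + 1) * t))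
        ((-1 : ℝ) ^ (k + 1) * (2 * π) ^ (2 * k) / 2 / ((2 * k).factorial) * Bfn (2 * k) t) := by
      have h2 := (hasSum_nat_add_iff'
        (f := fun n : ℕ => 1 / (n : ℝ) ^ (2 * k) * Real.cos (2 * π * (n : ℕ) * t)) 1).mpr h0
      simp only [Finset.range_one, Finset.sum_singleton, Nat.cast_zero,
        zero_pow (by omega : 2 * k ≠ 0), div_zero, zero_mul, sub_zero, mul_zero,
        Nat.cast_add, Nat.cast_one] at h2
      exact h2
    have h3 := h1.mul_left ((-1 : ℝ) ^ (k + 1) * ((2 * m).descFactorial (2 * k - 1) : ℝ) *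
      2 ^ (2 * m - 2 * k + 1) * (2 ^ (2 * k) / π ^ (2 * k)))
    -- value equality
    have hnat : (2 * m + 1) * (2 * m).descFactorial (2 * k - 1)
        = (2 * m + 1).choose (2 * k) * ((2 * k).factorial) := by
      have e1 : 2 * k = (2 * k - 1) + 1 := by omega
      rw [← Nat.succ_descFactorial_succ, ← e1, Nat.descFactorial_eq_factorial_mul_choose]
      ring
    have hc : (2 * (m : ℝ) + 1) * ((2 * m).descFactorial (2 * k - 1) : ℝ)
        = ((2 * m + 1).choose (2 * k) : ℝ) * (((2 * k).factorial) : ℝ) := by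
      exact_mod_cast congrArg (Nat.cast : ℕ → ℝ) hnat
    have hp : (2 : ℝ) ^ (2 * m - 2 * k + 1) * 2 ^ (2 * k) = 2 * 2 ^ (2 * m) := by
      rw [← pow_add, show 2 * m - 2 * k + 1 + 2 * k = 2 * m + 1 by omega, pow_succ]
      ring
    have h4k : (2 : ℝ) ^ (2 * k) = 4 ^ k := by
      rw [show (4 : ℝ) = 2 ^ 2 by norm_num, ← pow_mul]
    have hsign : ((-1 : ℝ) ^ (k + 1)) * ((-1 : ℝ) ^ (k + 1)) = 1 := by
      rw [← pow_add]
      exact Even.neg_one_pow ⟨k + 1, by ring⟩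
    have hπk : (π : ℝ) ^ (2 * k) ≠ 0 := pow_ne_zero _ hπ
    have hfac : (((2 * k).factorial) : ℝ) ≠ 0 := by positivity
    have hm1 : (2 * (m : ℝ) + 1) ≠ 0 := by positivity
    have hval : ((-1 : ℝ) ^ (k + 1) * ((2 * m).descFactorial (2 * k - 1) : ℝ) *
          2 ^ (2 * m - 2 * k + 1) * (2 ^ (2 * k) / π ^ (2 * k))) *
        ((-1 : ℝ) ^ (k + 1) * (2 * π) ^ (2 * k) / 2 / ((2 * k).factorial) * Bfn (2 * k) t)
        = 2 ^ (2 * m) / (2 * (m : ℝ) + 1) *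
          (((2 * m + 1).choose (2 * k) : ℝ) * 4 ^ k * Bfn (2 * k) t) := by
      have step1 : ((-1 : ℝ) ^ (k + 1) * ((2 * m).descFactorial (2 * k - 1) : ℝ) *
            2 ^ (2 * m - 2 * k + 1) * (2 ^ (2 * k) / π ^ (2 * k))) *
          ((-1 : ℝ) ^ (k + 1) * (2 * π) ^ (2 * k) / 2 / ((2 * k).factorial) * Bfn (2 * k) t)
          = ((-1 : ℝ) ^ (k + 1) * (-1) ^ (k + 1)) *
            (((2 * m).descFactorial (2 * k - 1) : ℝ) *
              ((2 : ℝ) ^ (2 * m - 2 * k + 1) * 2 ^ (2 * k)) * 2 ^ (2 * k) *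
              (π ^ (2 * k) / π ^ (2 * k)) / 2 / ((2 * k).factorial) * Bfn (2 * k) t) := by
        rw [mul_pow 2 π (2 * k)]
        field_simp
      rw [step1, hsign, div_self hπk, hp, h4k]
      field_simp
      linear_combination Bfn (2 * k) t * hc
    rw [hval] at h3
    -- function equality
    refine h3.congr_fun fun n => ?_
    have harg : 2 * π * ((n : ℝ) + 1) * t = ((n : ℝ) + 1) * π + ((n : ℝ) + 1) * π * x / 2 := by
      rw [htdef]; ring
    have hsin : Real.sin (((n : ℝ) + 1) * π) = 0 := by
      have hs := Real.sin_nat_mul_pi (n + 1)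
      push_cast at hs
      exact hs
    have hcos : Real.cos (2 * π * ((n : ℝ) + 1) * t)
        = Real.cos (((n : ℝ) + 1) * π) * Real.cos (((n : ℝ) + 1) * π * x / 2) := by
      rw [harg, Real.cos_add, hsin]
      ring
    rw [hcos]
    ring
  have htot := hasSum_sum hks
  have htot2 : HasSum (fun n : ℕ =>
      (∑ k ∈ Finset.Icc 1 m,
        (-1 : ℝ) ^ (k + 1) * ((2 * m).descFactorial (2 * k - 1) : ℝ) *
          2 ^ (2 * m - 2 * k + 1) * (2 ^ (2 * k) / (((n : ℝ) + 1) ^ (2 * k) * π ^ (2 * k))) *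
          Real.cos (((n : ℝ) + 1) * π)) * Real.cos (((n : ℝ) + 1) * π * x / 2))
      (∑ k ∈ Finset.Icc 1 m, 2 ^ (2 * m) / (2 * (m : ℝ) + 1) *
        (((2 * m + 1).choose (2 * k) : ℝ) * 4 ^ k * Bfn (2 * k) t)) := by
    refine htot.congr_fun fun n => ?_
    rw [Finset.sum_mul]
  have hVsum : ∑ k ∈ Finset.Icc 1 m, 2 ^ (2 * m) / (2 * (m : ℝ) + 1) *
        (((2 * m + 1).choose (2 * k) : ℝ) * 4 ^ k * Bfn (2 * k) t)
      = 2 ^ (2 * m) / (2 * (m : ℝ) + 1) * ((2 * (m : ℝ) + 1) * (2 * t - 1) ^ (2 * m) - 1) := by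
    rw [← Finset.mul_sum]
    congr 1
    have hr : Finset.range (m + 1) = insert 0 (Finset.Icc 1 m) := by
      ext a
      simp only [Finset.mem_range, Finset.mem_insert, Finset.mem_Icc]
      omega
    have hk0 := key_identity m t
    rw [hr, Finset.sum_insert (by simp)] at hk0
    simp only [Nat.mul_zero, Nat.choose_zero_right, Nat.cast_one, pow_zero, Bfn_zero_eval,
      one_mul, mul_one] at hk0
    linarith
  rw [htot2.tsum_eq, hVsum]
  have h2t : 2 * t - 1 = x / 2 := by rw [htdef]; ring
  rw [h2t]
  have hxp : (2 : ℝ) ^ (2 * m) * (x / 2) ^ (2 * m) = x ^ (2 * m) := by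
    rw [← mul_pow]; ring_nf
  have hm1 : (2 * (m : ℝ) + 1) ≠ 0 := by positivity
  have hhalf : ((1 : ℝ) / 2) ^ (2 * m) * 2 ^ (2 * m) = 1 := by
    rw [← mul_pow]; norm_num
  field_simp
  linear_combination -((2 * (m : ℝ) + 1) * x ^ (2 * m)) * hhalf
end
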